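/- Let (f₁,…,f_N; p₁,…,p_N) be an admissible iterated function system with constants ε, α, δ, M = ε^{-α} as in the basic estimates, and let a ∈ (0,1/2) satisfy M < a^{-α}/6. With ε_n = (1−δ)^{⌊n^{1/4}⌋/2} and J = [a, 1−a], there exists n₀ ∈ ℕ such that for every n ≥ n₀: ℙ({ i ∈ Σ : f_i^{⌊n^{1/4}⌋}([ε_n, 1−ε_n]) ⊆ J }) ≥ 1/5. -/

import Mathlib

open Set MeasureTheory Finset Filter

/-- An admissible iterated function system on `[0,1]`: increasing homeomorphisms of
`[0,1]` fixing the endpoints, `C¹` near the endpoints with positive derivatives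
`d i` at `0` and `e i` at `1`, positive probabilities, positive Lyapunov exponents at
both endpoints, and at every interior point some map moves it left and some right. -/
structure AdmissibleIFS (N : ℕ) (f : Fin N → ℝ → ℝ) (p d e : Fin N → ℝ) : Prop where
  meas : ∀ i, Measurable (f i)
  mono : ∀ i, StrictMonoOn (f i) (Icc 0 1)
  maps : ∀ i, MapsTo (f i) (Icc 0 1) (Icc 0 1)
  cont : ∀ i, ContinuousOn (f i) (Icc 0 1)
  surj : ∀ i, SurjOn (f i) (Icc 0 1) (Icc 0 1)
  fix0 : ∀ i, f i 0 = 0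
  fix1 : ∀ i, f i 1 = 1
  ppos : ∀ i, 0 < p i
  psum : ∑ i, p i = 1
  c1 : ∀ i, ∃ η > (0:ℝ), ContDiffOn ℝ 1 (f i) (Icc 0 η) ∧ ContDiffOn ℝ 1 (f i) (Icc (1 - η) 1)
  deriv0 : ∀ i, HasDerivWithinAt (f i) (d i) (Icc 0 1) 0
  deriv1 : ∀ i, HasDerivWithinAt (f i) (e i) (Icc 0 1) 1
  dpos : ∀ i, 0 < d i
  epos : ∀ i, 0 < e i
  lyap0 : 0 < ∑ i, p i * Real.log (d i)
  lyap1 : 0 < ∑ i, p i * Real.log (e i)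
  interior : ∀ x ∈ Ioo (0:ℝ) 1, (∃ i, f i x < x) ∧ (∃ j, x < f j x)

/-- Iterates along a sequence of indices: `wordIter f ω n = f_{ω (n-1)} ∘ ⋯ ∘ f_{ω 0}`. -/
def wordIter {N : ℕ} (f : Fin N → ℝ → ℝ) (ω : ℕ → Fin N) : ℕ → ℝ → ℝ
  | 0 => id
  | n + 1 => f (ω n) ∘ wordIter f ω n

/-- `⌊n^{1/4}⌋`. -/
noncomputable def nroot4 (n : ℕ) : ℕ := ⌊(n : ℝ) ^ ((1 : ℝ) / 4)⌋₊

namespace Stmt15Aux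

open scoped Classical ENNReal

variable {N : ℕ}

lemma wordIter_succ (f : Fin N → ℝ → ℝ) (ω : ℕ → Fin N) (m : ℕ) (x : ℝ) :
    wordIter f ω (m + 1) x = f (ω m) (wordIter f ω m x) := rfl

lemma wordIter_congr (f : Fin N → ℝ → ℝ) (ω ω' : ℕ → Fin N) (m : ℕ)
    (h : ∀ k < m, ω k = ω' k) (x : ℝ) :
    wordIter f ω m x = wordIter f ω' m x := by
  induction m with
  | zero => rfl
  | succ m ih =>
    rw [wordIter_succ, wordIter_succ, h m (by omega), ih fun k hk => h k (by omega)]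

variable {f : Fin N → ℝ → ℝ} {p d e : Fin N → ℝ}

lemma wordIter_mem (hadm : AdmissibleIFS N f p d e) (ω : ℕ → Fin N) (m : ℕ)
    {x : ℝ} (hx : x ∈ Icc (0:ℝ) 1) : wordIter f ω m x ∈ Icc (0:ℝ) 1 := by
  induction m with
  | zero => exact hx
  | succ m ih => exact hadm.maps _ ih

lemma wordIter_mono (hadm : AdmissibleIFS N f p d e) (ω : ℕ → Fin N) (m : ℕ)
    {x y : ℝ} (hx : x ∈ Icc (0:ℝ) 1) (hy : y ∈ Icc (0:ℝ) 1) (hxy : x ≤ y) :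
    wordIter f ω m x ≤ wordIter f ω m y := by
  induction m with
  | zero => exact hxy
  | succ m ih =>
    exact (hadm.mono _).monotoneOn (wordIter_mem hadm ω m hx)
      (wordIter_mem hadm ω m hy) ih

/-- product weight of a finite word -/
noncomputable def wt (p : Fin N → ℝ) {m : ℕ} (u : Fin m → Fin N) : ℝ≥0∞ :=
  ∏ i, ENNReal.ofReal (p (u i))

lemma sum_wt (hp : ∀ i, 0 ≤ p i) (hps : ∑ i, p i = 1) (m : ℕ) :
    ∑ u : Fin m → Fin N, wt p u = 1 := by
  have h1 : ∑ j : Fin N, ENNReal.ofReal (p j) = 1 := by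
    rw [← ENNReal.ofReal_sum_of_nonneg fun i _ => hp i, hps, ENNReal.ofReal_one]
  have key : (∏ _i : Fin m, ∑ j : Fin N, ENNReal.ofReal (p j))
      = ∑ u : Fin m → Fin N, ∏ i, ENNReal.ofReal (p (u i)) := by
    rw [Finset.prod_univ_sum, Fintype.piFinset_univ]
  simp only [wt]
  rw [← key, h1]
  simp

lemma wt_snoc {m : ℕ} (u : Fin m → Fin N) (i : Fin N) :
    wt p (Fin.snoc u i) = wt p u * ENNReal.ofReal (p i) := by
  simp only [wt]
  rw [Fin.prod_univ_castSucc]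
  simp

/-- embed a finite word into an infinite one using junk value `i0` -/
def emb (i0 : Fin N) {m : ℕ} (u : Fin m → Fin N) : ℕ → Fin N :=
  fun k => if h : k < m then u ⟨k, h⟩ else i0

lemma emb_snoc_lt (i0 : Fin N) {m : ℕ} (u : Fin m → Fin N) (i : Fin N) {k : ℕ} (hk : k < m) :
    emb i0 (Fin.snoc u i) k = emb i0 u k := by
  have hk' : k < m + 1 := by omega
  simp only [emb, dif_pos hk, dif_pos hk']
  have : (⟨k, hk'⟩ : Fin (m+1)) = Fin.castSucc ⟨k, hk⟩ := rfl
  rw [this, Fin.snoc_castSucc]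

lemma emb_snoc_last (i0 : Fin N) {m : ℕ} (u : Fin m → Fin N) (i : Fin N) :
    emb i0 (Fin.snoc u i) m = i := by
  simp only [emb, dif_pos (Nat.lt_succ_self m)]
  have : (⟨m, Nat.lt_succ_self m⟩ : Fin (m+1)) = Fin.last m := rfl
  rw [this, Fin.snoc_last]

lemma wordIter_emb_prefix (f : Fin N → ℝ → ℝ) (i0 : Fin N) {m : ℕ} (u : Fin m → Fin N)
    (i : Fin N) {j : ℕ} (hj : j ≤ m) (x : ℝ) :
    wordIter f (emb i0 (Fin.snoc u i)) j x = wordIter f (emb i0 u) j x :=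
  wordIter_congr f _ _ j (fun k hk => emb_snoc_lt i0 u i (by omega)) x

lemma wordIter_emb_snoc (f : Fin N → ℝ → ℝ) (i0 : Fin N) {m : ℕ} (u : Fin m → Fin N)
    (i : Fin N) (x : ℝ) :
    wordIter f (emb i0 (Fin.snoc u i)) (m + 1) x = f i (wordIter f (emb i0 u) m x) := by
  rw [wordIter_succ, emb_snoc_last, wordIter_emb_prefix f i0 u i le_rfl]

lemma wordIter_emb_restrict (f : Fin N → ℝ → ℝ) (i0 : Fin N) (ω : ℕ → Fin N) {m j : ℕ}
    (hj : j ≤ m) (x : ℝ) :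
    wordIter f (emb i0 fun k : Fin m => ω k) j x = wordIter f ω j x := by
  refine wordIter_congr f _ _ j (fun k hk => ?_) x
  simp only [emb, dif_pos (by omega : k < m)]

end Stmt15Aux

namespace Stmt15Aux

open scoped Classical ENNReal

variable {N : ℕ} {p d e : Fin N → ℝ}

lemma coord_prob (hp : ∀ i, 0 ≤ p i) (hps : ∑ i, p i = 1) :
    IsProbabilityMeasure (∑ j : Fin N, ENNReal.ofReal (p j) • Measure.dirac j) := by
  constructor
  rw [Measure.finset_sum_apply]
  simp only [Measure.smul_apply, measure_univ, smul_eq_mul, mul_one]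
  rw [← ENNReal.ofReal_sum_of_nonneg fun i _ => hp i, hps, ENNReal.ofReal_one]

lemma coord_singleton (hp : ∀ i, 0 ≤ p i) (j : Fin N) :
    (∑ j : Fin N, ENNReal.ofReal (p j) • Measure.dirac j) {j} = ENNReal.ofReal (p j) := by
  rw [Measure.finset_sum_apply]
  simp only [Measure.smul_apply, Measure.dirac_apply, smul_eq_mul]
  rw [Finset.sum_eq_single j]
  · simp
  · intro b _ hb
    simp [Set.indicator_of_notMem, hb]
  · simp

lemma prob_cylinder (hp : ∀ i, 0 ≤ p i) (hps : ∑ i, p i = 1)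
    (ℙ : Measure (ℕ → Fin N))
    (hcyl : ∀ m : ℕ, ℙ.map (fun ω (k : Fin m) => ω k)
      = Measure.pi (fun _ : Fin m => ∑ j, ENNReal.ofReal (p j) • Measure.dirac j))
    (m : ℕ) (S : Set (Fin m → Fin N)) :
    ℙ ((fun ω (k : Fin m) => ω k) ⁻¹' S)
      = ∑ u : Fin m → Fin N, if u ∈ S then wt p u else 0 := by
  classical
  have hπ : Measurable (fun ω : ℕ → Fin N => fun k : Fin m => ω k) :=
    measurable_pi_lambda _ fun k => measurable_pi_apply _
  have hS : MeasurableSet S := S.to_countable.measurableSet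
  rw [← Measure.map_apply hπ hS, hcyl m]
  haveI : ∀ i : Fin m, IsProbabilityMeasure
      ((fun _ : Fin m => ∑ j : Fin N, ENNReal.ofReal (p j) • Measure.dirac j) i) :=
    fun _ => coord_prob hp hps
  have hSdecomp : S = ⋃ u ∈ (Set.toFinite S).toFinset, {u} := by
    ext y
    constructor
    · intro hy
      simp only [Set.mem_iUnion, Set.mem_singleton_iff]
      exact ⟨y, (Set.Finite.mem_toFinset _).2 hy, rfl⟩
    · intro hy
      simp only [Set.mem_iUnion, Set.mem_singleton_iff] at hy
      obtain ⟨u, hu, rfl⟩ := hy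
      exact (Set.Finite.mem_toFinset _).1 hu
  have hfs : (Set.toFinite S).toFinset = Finset.univ.filter (· ∈ S) := by
    ext u
    simp only [Set.Finite.mem_toFinset, Finset.mem_filter, Finset.mem_univ, true_and]
  have hpi_singleton : ∀ u : Fin m → Fin N,
      (Measure.pi fun _ : Fin m => ∑ j, ENNReal.ofReal (p j) • Measure.dirac j) {u}
        = wt p u := by
    intro u
    rw [← Set.univ_pi_singleton, Measure.pi_pi]
    exact Finset.prod_congr rfl fun i _ => coord_singleton hp (u i)
  calc (Measure.pi fun _ : Fin m => ∑ j, ENNReal.ofReal (p j) • Measure.dirac j) S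
      = ∑ u ∈ (Set.toFinite S).toFinset,
          (Measure.pi fun _ : Fin m => ∑ j, ENNReal.ofReal (p j) • Measure.dirac j) {u} := by
        conv_lhs => rw [hSdecomp]
        exact measure_biUnion_finset
          (fun u _ v _ huv => by simp [Function.onFun, huv])
          (fun u _ => measurableSet_singleton u)
    _ = ∑ u ∈ Finset.univ.filter (· ∈ S), wt p u := by
        rw [hfs]
        exact Finset.sum_congr rfl fun u _ => hpi_singleton u
    _ = ∑ u : Fin m → Fin N, if u ∈ S then wt p u else 0 := Finset.sum_filter _ _

end Stmt15Aux

namespace Stmt15Aux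

open scoped Classical ENNReal

variable {N : ℕ} {f : Fin N → ℝ → ℝ} {p d e : Fin N → ℝ}

lemma escape_bound (hadm : AdmissibleIFS N f p d e) (i0 : Fin N)
    {ε α M : ℝ} (hε0 : 0 < ε) (hε1 : ε < 1) (hα0 : 0 < α) (hM : M = ε ^ (-α))
    (hclass : ∀ μ : Measure ℝ, IsProbabilityMeasure μ → μ (Icc (0:ℝ) 1)ᶜ = 0 →
      (∀ x ∈ Icc (0:ℝ) 1, μ (Icc 0 x) ≤ ENNReal.ofReal (M * x ^ α)) →
      ∀ x ∈ Icc (0:ℝ) 1,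
        (∑ i, ENNReal.ofReal (p i) • Measure.map (f i) μ) (Icc 0 x)
          ≤ ENNReal.ofReal (M * x ^ α))
    (m : ℕ) {x : ℝ} (hx : x ∈ Icc (0:ℝ) 1) :
    ∀ t ∈ Icc (0:ℝ) 1,
      (∑ u : Fin m → Fin N,
        if (∃ j, 1 ≤ j ∧ j ≤ m ∧ ε ≤ wordIter f (emb i0 u) j x)
            ∧ wordIter f (emb i0 u) m x ≤ t then wt p u else 0)
      ≤ ENNReal.ofReal (M * t ^ α) := by
  have hone : ∀ t : ℝ, ε ≤ t → (1:ℝ≥0∞) ≤ ENNReal.ofReal (M * t ^ α) := by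
    intro t htε
    rw [ENNReal.one_le_ofReal, hM]
    calc (1:ℝ) = ε ^ (-α) * ε ^ α := by rw [← Real.rpow_add hε0]; simp
      _ ≤ ε ^ (-α) * t ^ α :=
        mul_le_mul_of_nonneg_left (Real.rpow_le_rpow hε0.le htε hα0.le)
          (Real.rpow_nonneg hε0.le _)
  have hwt_le : ∀ {m' : ℕ} (P : (Fin m' → Fin N) → Prop),
      (∑ u : Fin m' → Fin N, if P u then wt p u else 0) ≤ 1 := by
    intro m' P
    calc (∑ u : Fin m' → Fin N, if P u then wt p u else 0)
        ≤ ∑ u : Fin m' → Fin N, wt p u :=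
          Finset.sum_le_sum fun u _ => by split_ifs <;> simp
      _ = 1 := sum_wt (fun i => (hadm.ppos i).le) hadm.psum m'
  induction m with
  | zero =>
    intro t ht
    refine le_trans (le_of_eq (Finset.sum_eq_zero fun u _ => ?_)) (zero_le)
    rw [if_neg]
    rintro ⟨⟨j, hj1, hj0, -⟩, -⟩
    omega
  | succ m ih =>
    intro t ht
    by_cases htε : ε ≤ t
    · refine le_trans ?_ (hone t htε)
      calc (∑ u : Fin (m+1) → Fin N,
            if (∃ j, 1 ≤ j ∧ j ≤ m + 1 ∧ ε ≤ wordIter f (emb i0 u) j x)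
                ∧ wordIter f (emb i0 u) (m+1) x ≤ t then wt p u else 0)
          ≤ ∑ u : Fin (m+1) → Fin N, wt p u :=
            Finset.sum_le_sum fun u _ => by split_ifs <;> simp
        _ = 1 := sum_wt (fun i => (hadm.ppos i).le) hadm.psum _
    push_neg at htε
    -- notation
    have hFmem : ∀ u : Fin m → Fin N, wordIter f (emb i0 u) m x ∈ Icc (0:ℝ) 1 :=
      fun u => wordIter_mem hadm _ m hx
    set s : ℝ≥0∞ := ∑ u : Fin m → Fin N,
        if (∃ j, 1 ≤ j ∧ j ≤ m ∧ ε ≤ wordIter f (emb i0 u) j x) then wt p u else 0 with hs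
    have hs1 : s ≤ 1 := hwt_le _
    set μ : Measure ℝ := (∑ u : Fin m → Fin N,
        (if (∃ j, 1 ≤ j ∧ j ≤ m ∧ ε ≤ wordIter f (emb i0 u) j x) then wt p u else 0)
          • Measure.dirac (wordIter f (emb i0 u) m x)) + (1 - s) • Measure.dirac 1 with hμdef
    have hμapp : ∀ A : Set ℝ, μ A = (∑ u : Fin m → Fin N,
        (if (∃ j, 1 ≤ j ∧ j ≤ m ∧ ε ≤ wordIter f (emb i0 u) j x) then wt p u else 0)
          * A.indicator 1 (wordIter f (emb i0 u) m x)) + (1 - s) * A.indicator 1 1 := by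
      intro A
      rw [hμdef, Measure.add_apply, Measure.smul_apply, Measure.finset_sum_apply]
      simp only [Measure.smul_apply, Measure.dirac_apply, smul_eq_mul]
    have hμprob : IsProbabilityMeasure μ := by
      constructor
      rw [hμapp Set.univ]
      simp only [Set.indicator_univ, Pi.one_apply, mul_one]
      exact add_tsub_cancel_of_le hs1
    have hμsupp : μ (Icc (0:ℝ) 1)ᶜ = 0 := by
      rw [hμapp]
      rw [Set.indicator_of_notMem (by simp : (1:ℝ) ∉ (Icc (0:ℝ) 1)ᶜ), mul_zero, add_zero]
      exact Finset.sum_eq_zero fun u _ => by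
        rw [Set.indicator_of_notMem (by simpa using hFmem u), mul_zero]
    have hμcls : ∀ t' ∈ Icc (0:ℝ) 1, μ (Icc 0 t') ≤ ENNReal.ofReal (M * t' ^ α) := by
      intro t' ht'
      rcases eq_or_lt_of_le ht'.2 with h1 | h1
      · calc μ (Icc 0 t') ≤ μ Set.univ := measure_mono (Set.subset_univ _)
          _ = 1 := measure_univ
          _ ≤ _ := hone t' (by rw [h1]; exact hε1.le)
      · rw [hμapp]
        rw [Set.indicator_of_notMem (fun hc => absurd hc.2 (not_le.2 h1)), mul_zero,
          add_zero]
        have hcongr : ∀ u : Fin m → Fin N,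
            (if (∃ j, 1 ≤ j ∧ j ≤ m ∧ ε ≤ wordIter f (emb i0 u) j x) then wt p u else 0)
              * (Icc (0:ℝ) t').indicator 1 (wordIter f (emb i0 u) m x)
            = if (∃ j, 1 ≤ j ∧ j ≤ m ∧ ε ≤ wordIter f (emb i0 u) j x)
                ∧ wordIter f (emb i0 u) m x ≤ t' then wt p u else 0 := by
          intro u
          by_cases hEu : ∃ j, 1 ≤ j ∧ j ≤ m ∧ ε ≤ wordIter f (emb i0 u) j x
          · by_cases hle : wordIter f (emb i0 u) m x ≤ t'
            · have hm1 : wordIter f (emb i0 u) m x ∈ Icc (0:ℝ) t' := ⟨(hFmem u).1, hle⟩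
              have hm2 : (∃ j, 1 ≤ j ∧ j ≤ m ∧ ε ≤ wordIter f (emb i0 u) j x)
                  ∧ wordIter f (emb i0 u) m x ≤ t' := ⟨hEu, hle⟩
              rw [if_pos hEu, Set.indicator_of_mem hm1, if_pos hm2, Pi.one_apply, mul_one]
            · rw [Set.indicator_of_notMem (fun hc => hle hc.2), mul_zero,
                if_neg (fun hc => hle hc.2)]
          · rw [if_neg hEu, zero_mul, if_neg (fun hc => hEu hc.1)]
        rw [Finset.sum_congr rfl fun u _ => hcongr u]
        exact ih t' ⟨ht'.1, h1.le⟩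
    have hkey := hclass μ hμprob hμsupp hμcls t ht
    -- reindex the sum over words of length m+1
    have hsplit : (∑ w : Fin (m+1) → Fin N,
        if (∃ j, 1 ≤ j ∧ j ≤ m + 1 ∧ ε ≤ wordIter f (emb i0 w) j x)
            ∧ wordIter f (emb i0 w) (m+1) x ≤ t then wt p w else 0)
        = ∑ z : Fin N × (Fin m → Fin N),
          if (∃ j, 1 ≤ j ∧ j ≤ m + 1 ∧ ε ≤ wordIter f (emb i0 (Fin.snoc z.2 z.1 :
                Fin (m+1) → Fin N)) j x)
              ∧ wordIter f (emb i0 (Fin.snoc z.2 z.1 : Fin (m+1) → Fin N)) (m+1) x ≤ t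
            then wt p (Fin.snoc z.2 z.1 : Fin (m+1) → Fin N) else 0 := by
      rw [← Equiv.sum_comp (Fin.snocEquiv (fun _ => Fin N))]
      rfl
    rw [hsplit, Fintype.sum_prod_type]
    have hterm : ∀ (i : Fin N) (u : Fin m → Fin N),
        (if (∃ j, 1 ≤ j ∧ j ≤ m + 1 ∧ ε ≤ wordIter f (emb i0 (Fin.snoc u i :
              Fin (m+1) → Fin N)) j x)
            ∧ wordIter f (emb i0 (Fin.snoc u i : Fin (m+1) → Fin N)) (m+1) x ≤ t
          then wt p (Fin.snoc u i : Fin (m+1) → Fin N) else 0)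
        ≤ ENNReal.ofReal (p i) *
          (if (∃ j, 1 ≤ j ∧ j ≤ m ∧ ε ≤ wordIter f (emb i0 u) j x)
              ∧ f i (wordIter f (emb i0 u) m x) ≤ t then wt p u else 0) := by
      intro i u
      by_cases h : (∃ j, 1 ≤ j ∧ j ≤ m + 1 ∧ ε ≤ wordIter f (emb i0 (Fin.snoc u i :
            Fin (m+1) → Fin N)) j x)
          ∧ wordIter f (emb i0 (Fin.snoc u i : Fin (m+1) → Fin N)) (m+1) x ≤ t
      · obtain ⟨⟨j, hj1, hj2, hjε⟩, hfin⟩ := h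
        rw [wordIter_emb_snoc] at hfin
        have hEu : ∃ j, 1 ≤ j ∧ j ≤ m ∧ ε ≤ wordIter f (emb i0 u) j x := by
          rcases Nat.lt_or_ge j (m + 1) with hjm | hjm
          · exact ⟨j, hj1, by omega,
              by rwa [wordIter_emb_prefix f i0 u i (by omega)] at hjε⟩
          · exfalso
            have hj' : j = m + 1 := by omega
            rw [hj', wordIter_emb_snoc] at hjε
            linarith
        have hc1 : (∃ j, 1 ≤ j ∧ j ≤ m + 1 ∧ ε ≤ wordIter f (emb i0 (Fin.snoc u i :
              Fin (m+1) → Fin N)) j x)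
            ∧ wordIter f (emb i0 (Fin.snoc u i : Fin (m+1) → Fin N)) (m+1) x ≤ t :=
          ⟨⟨j, hj1, hj2, hjε⟩, by rw [wordIter_emb_snoc]; exact hfin⟩
        have hc2 : (∃ j, 1 ≤ j ∧ j ≤ m ∧ ε ≤ wordIter f (emb i0 u) j x)
            ∧ f i (wordIter f (emb i0 u) m x) ≤ t := ⟨hEu, hfin⟩
        rw [if_pos hc1, if_pos hc2, wt_snoc, mul_comm]
      · rw [if_neg h]
        exact zero_le
    have hmap : ∀ i : Fin N,
        (∑ u : Fin m → Fin N,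
          if (∃ j, 1 ≤ j ∧ j ≤ m ∧ ε ≤ wordIter f (emb i0 u) j x)
              ∧ f i (wordIter f (emb i0 u) m x) ≤ t then wt p u else 0)
        ≤ (Measure.map (f i) μ) (Icc 0 t) := by
      intro i
      rw [Measure.map_apply (hadm.meas i) measurableSet_Icc, hμapp]
      refine le_trans (Finset.sum_le_sum fun u _ => ?_) le_self_add
      by_cases h : (∃ j, 1 ≤ j ∧ j ≤ m ∧ ε ≤ wordIter f (emb i0 u) j x)
          ∧ f i (wordIter f (emb i0 u) m x) ≤ t
      · have hmem : wordIter f (emb i0 u) m x ∈ f i ⁻¹' Icc (0:ℝ) t :=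
          Set.mem_preimage.2 ⟨(hadm.maps i (hFmem u)).1, h.2⟩
        rw [if_pos h, if_pos h.1, Set.indicator_of_mem hmem, Pi.one_apply, mul_one]
      · rw [if_neg h]
        exact zero_le
    calc ∑ i : Fin N, ∑ u : Fin m → Fin N,
          (if (∃ j, 1 ≤ j ∧ j ≤ m + 1 ∧ ε ≤ wordIter f (emb i0 (Fin.snoc u i :
                Fin (m+1) → Fin N)) j x)
              ∧ wordIter f (emb i0 (Fin.snoc u i : Fin (m+1) → Fin N)) (m+1) x ≤ t
            then wt p (Fin.snoc u i : Fin (m+1) → Fin N) else 0)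
        ≤ ∑ i : Fin N, ENNReal.ofReal (p i) * (Measure.map (f i) μ) (Icc 0 t) := by
          refine Finset.sum_le_sum fun i _ => ?_
          refine le_trans (Finset.sum_le_sum fun u _ => hterm i u) ?_
          rw [← Finset.mul_sum]
          exact mul_le_mul_right (hmap i) _
      _ = (∑ i, ENNReal.ofReal (p i) • Measure.map (f i) μ) (Icc 0 t) := by
          rw [Measure.finset_sum_apply]
          simp only [Measure.smul_apply, smul_eq_mul]
      _ ≤ ENNReal.ofReal (M * t ^ α) := hkey

end Stmt15Aux

namespace Stmt15Aux

open scoped Classical ENNReal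

variable {N : ℕ} {f : Fin N → ℝ → ℝ} {p d e : Fin N → ℝ}

lemma escape_bound' (hadm : AdmissibleIFS N f p d e) (i0 : Fin N)
    {ε α M : ℝ} (hε0 : 0 < ε) (hε1 : ε < 1) (hα0 : 0 < α) (hM : M = ε ^ (-α))
    (hclass : ∀ μ : Measure ℝ, IsProbabilityMeasure μ → μ (Icc (0:ℝ) 1)ᶜ = 0 →
      (∀ x ∈ Icc (0:ℝ) 1, μ (Icc (1 - x) 1) ≤ ENNReal.ofReal (M * x ^ α)) →
      ∀ x ∈ Icc (0:ℝ) 1,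
        (∑ i, ENNReal.ofReal (p i) • Measure.map (f i) μ) (Icc (1 - x) 1)
          ≤ ENNReal.ofReal (M * x ^ α))
    (m : ℕ) {x : ℝ} (hx : x ∈ Icc (0:ℝ) 1) :
    ∀ t ∈ Icc (0:ℝ) 1,
      (∑ u : Fin m → Fin N,
        if (∃ j, 1 ≤ j ∧ j ≤ m ∧ wordIter f (emb i0 u) j x ≤ 1 - ε)
            ∧ 1 - t ≤ wordIter f (emb i0 u) m x then wt p u else 0)
      ≤ ENNReal.ofReal (M * t ^ α) := by
  have hone : ∀ t : ℝ, ε ≤ t → (1:ℝ≥0∞) ≤ ENNReal.ofReal (M * t ^ α) := by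
    intro t htε
    rw [ENNReal.one_le_ofReal, hM]
    calc (1:ℝ) = ε ^ (-α) * ε ^ α := by rw [← Real.rpow_add hε0]; simp
      _ ≤ ε ^ (-α) * t ^ α :=
        mul_le_mul_of_nonneg_left (Real.rpow_le_rpow hε0.le htε hα0.le)
          (Real.rpow_nonneg hε0.le _)
  have hwt_le : ∀ {m' : ℕ} (P : (Fin m' → Fin N) → Prop),
      (∑ u : Fin m' → Fin N, if P u then wt p u else 0) ≤ 1 := by
    intro m' P
    calc (∑ u : Fin m' → Fin N, if P u then wt p u else 0)
        ≤ ∑ u : Fin m' → Fin N, wt p u :=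
          Finset.sum_le_sum fun u _ => by split_ifs <;> simp
      _ = 1 := sum_wt (fun i => (hadm.ppos i).le) hadm.psum m'
  induction m with
  | zero =>
    intro t ht
    refine le_trans (le_of_eq (Finset.sum_eq_zero fun u _ => ?_)) (zero_le)
    rw [if_neg]
    rintro ⟨⟨j, hj1, hj0, -⟩, -⟩
    omega
  | succ m ih =>
    intro t ht
    by_cases htε : ε ≤ t
    · refine le_trans ?_ (hone t htε)
      calc (∑ u : Fin (m+1) → Fin N,
            if (∃ j, 1 ≤ j ∧ j ≤ m + 1 ∧ wordIter f (emb i0 u) j x ≤ 1 - ε)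
                ∧ 1 - t ≤ wordIter f (emb i0 u) (m+1) x then wt p u else 0)
          ≤ ∑ u : Fin (m+1) → Fin N, wt p u :=
            Finset.sum_le_sum fun u _ => by split_ifs <;> simp
        _ = 1 := sum_wt (fun i => (hadm.ppos i).le) hadm.psum _
    push_neg at htε
    -- notation
    have hFmem : ∀ u : Fin m → Fin N, wordIter f (emb i0 u) m x ∈ Icc (0:ℝ) 1 :=
      fun u => wordIter_mem hadm _ m hx
    set s : ℝ≥0∞ := ∑ u : Fin m → Fin N,
        if (∃ j, 1 ≤ j ∧ j ≤ m ∧ wordIter f (emb i0 u) j x ≤ 1 - ε) then wt p u else 0 with hs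
    have hs1 : s ≤ 1 := hwt_le _
    set μ : Measure ℝ := (∑ u : Fin m → Fin N,
        (if (∃ j, 1 ≤ j ∧ j ≤ m ∧ wordIter f (emb i0 u) j x ≤ 1 - ε) then wt p u else 0)
          • Measure.dirac (wordIter f (emb i0 u) m x)) + (1 - s) • Measure.dirac 0 with hμdef
    have hμapp : ∀ A : Set ℝ, μ A = (∑ u : Fin m → Fin N,
        (if (∃ j, 1 ≤ j ∧ j ≤ m ∧ wordIter f (emb i0 u) j x ≤ 1 - ε) then wt p u else 0)
          * A.indicator 1 (wordIter f (emb i0 u) m x)) + (1 - s) * A.indicator 1 0 := by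
      intro A
      rw [hμdef, Measure.add_apply, Measure.smul_apply, Measure.finset_sum_apply]
      simp only [Measure.smul_apply, Measure.dirac_apply, smul_eq_mul]
    have hμprob : IsProbabilityMeasure μ := by
      constructor
      rw [hμapp Set.univ]
      simp only [Set.indicator_univ, Pi.one_apply, mul_one]
      exact add_tsub_cancel_of_le hs1
    have hμsupp : μ (Icc (0:ℝ) 1)ᶜ = 0 := by
      rw [hμapp]
      rw [Set.indicator_of_notMem (by simp : (0:ℝ) ∉ (Icc (0:ℝ) 1)ᶜ), mul_zero, add_zero]
      exact Finset.sum_eq_zero fun u _ => by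
        rw [Set.indicator_of_notMem (by simpa using hFmem u), mul_zero]
    have hμcls : ∀ t' ∈ Icc (0:ℝ) 1, μ (Icc (1 - t') 1) ≤ ENNReal.ofReal (M * t' ^ α) := by
      intro t' ht'
      rcases eq_or_lt_of_le ht'.2 with h1 | h1
      · calc μ (Icc (1 - t') 1) ≤ μ Set.univ := measure_mono (Set.subset_univ _)
          _ = 1 := measure_univ
          _ ≤ _ := hone t' (by rw [h1]; exact hε1.le)
      · rw [hμapp]
        rw [Set.indicator_of_notMem
          (fun hc => absurd hc.1 (not_le.2 (by linarith : (0:ℝ) < 1 - t'))), mul_zero,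
          add_zero]
        have hcongr : ∀ u : Fin m → Fin N,
            (if (∃ j, 1 ≤ j ∧ j ≤ m ∧ wordIter f (emb i0 u) j x ≤ 1 - ε) then wt p u else 0)
              * (Icc (1 - t') (1:ℝ)).indicator 1 (wordIter f (emb i0 u) m x)
            = if (∃ j, 1 ≤ j ∧ j ≤ m ∧ wordIter f (emb i0 u) j x ≤ 1 - ε)
                ∧ 1 - t' ≤ wordIter f (emb i0 u) m x then wt p u else 0 := by
          intro u
          by_cases hEu : ∃ j, 1 ≤ j ∧ j ≤ m ∧ wordIter f (emb i0 u) j x ≤ 1 - ε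
          · by_cases hle : 1 - t' ≤ wordIter f (emb i0 u) m x
            · have hm1 : wordIter f (emb i0 u) m x ∈ Icc (1 - t') (1:ℝ) := ⟨hle, (hFmem u).2⟩
              have hm2 : (∃ j, 1 ≤ j ∧ j ≤ m ∧ wordIter f (emb i0 u) j x ≤ 1 - ε)
                  ∧ 1 - t' ≤ wordIter f (emb i0 u) m x := ⟨hEu, hle⟩
              rw [if_pos hEu, Set.indicator_of_mem hm1, if_pos hm2, Pi.one_apply, mul_one]
            · rw [Set.indicator_of_notMem (fun hc => hle hc.1), mul_zero,
                if_neg (fun hc => hle hc.2)]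
          · rw [if_neg hEu, zero_mul, if_neg (fun hc => hEu hc.1)]
        rw [Finset.sum_congr rfl fun u _ => hcongr u]
        exact ih t' ⟨ht'.1, h1.le⟩
    have hkey := hclass μ hμprob hμsupp hμcls t ht
    -- reindex the sum over words of length m+1
    have hsplit : (∑ w : Fin (m+1) → Fin N,
        if (∃ j, 1 ≤ j ∧ j ≤ m + 1 ∧ wordIter f (emb i0 w) j x ≤ 1 - ε)
            ∧ 1 - t ≤ wordIter f (emb i0 w) (m+1) x then wt p w else 0)
        = ∑ z : Fin N × (Fin m → Fin N),
          if (∃ j, 1 ≤ j ∧ j ≤ m + 1 ∧ wordIter f (emb i0 (Fin.snoc z.2 z.1 :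
                Fin (m+1) → Fin N)) j x ≤ 1 - ε)
              ∧ 1 - t ≤ wordIter f (emb i0 (Fin.snoc z.2 z.1 : Fin (m+1) → Fin N)) (m+1) x
            then wt p (Fin.snoc z.2 z.1 : Fin (m+1) → Fin N) else 0 := by
      rw [← Equiv.sum_comp (Fin.snocEquiv (fun _ => Fin N))]
      rfl
    rw [hsplit, Fintype.sum_prod_type]
    have hterm : ∀ (i : Fin N) (u : Fin m → Fin N),
        (if (∃ j, 1 ≤ j ∧ j ≤ m + 1 ∧ wordIter f (emb i0 (Fin.snoc u i :
              Fin (m+1) → Fin N)) j x ≤ 1 - ε)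
            ∧ 1 - t ≤ wordIter f (emb i0 (Fin.snoc u i : Fin (m+1) → Fin N)) (m+1) x
          then wt p (Fin.snoc u i : Fin (m+1) → Fin N) else 0)
        ≤ ENNReal.ofReal (p i) *
          (if (∃ j, 1 ≤ j ∧ j ≤ m ∧ wordIter f (emb i0 u) j x ≤ 1 - ε)
              ∧ 1 - t ≤ f i (wordIter f (emb i0 u) m x) then wt p u else 0) := by
      intro i u
      by_cases h : (∃ j, 1 ≤ j ∧ j ≤ m + 1 ∧ wordIter f (emb i0 (Fin.snoc u i :
            Fin (m+1) → Fin N)) j x ≤ 1 - ε)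
          ∧ 1 - t ≤ wordIter f (emb i0 (Fin.snoc u i : Fin (m+1) → Fin N)) (m+1) x
      · obtain ⟨⟨j, hj1, hj2, hjε⟩, hfin⟩ := h
        rw [wordIter_emb_snoc] at hfin
        have hEu : ∃ j, 1 ≤ j ∧ j ≤ m ∧ wordIter f (emb i0 u) j x ≤ 1 - ε := by
          rcases Nat.lt_or_ge j (m + 1) with hjm | hjm
          · exact ⟨j, hj1, by omega,
              by rwa [wordIter_emb_prefix f i0 u i (by omega)] at hjε⟩
          · exfalso
            have hj' : j = m + 1 := by omega
            rw [hj', wordIter_emb_snoc] at hjε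
            linarith
        have hc1 : (∃ j, 1 ≤ j ∧ j ≤ m + 1 ∧ wordIter f (emb i0 (Fin.snoc u i :
              Fin (m+1) → Fin N)) j x ≤ 1 - ε)
            ∧ 1 - t ≤ wordIter f (emb i0 (Fin.snoc u i : Fin (m+1) → Fin N)) (m+1) x :=
          ⟨⟨j, hj1, hj2, hjε⟩, by rw [wordIter_emb_snoc]; exact hfin⟩
        have hc2 : (∃ j, 1 ≤ j ∧ j ≤ m ∧ wordIter f (emb i0 u) j x ≤ 1 - ε)
            ∧ 1 - t ≤ f i (wordIter f (emb i0 u) m x) := ⟨hEu, hfin⟩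
        rw [if_pos hc1, if_pos hc2, wt_snoc, mul_comm]
      · rw [if_neg h]
        exact zero_le
    have hmap : ∀ i : Fin N,
        (∑ u : Fin m → Fin N,
          if (∃ j, 1 ≤ j ∧ j ≤ m ∧ wordIter f (emb i0 u) j x ≤ 1 - ε)
              ∧ 1 - t ≤ f i (wordIter f (emb i0 u) m x) then wt p u else 0)
        ≤ (Measure.map (f i) μ) (Icc (1 - t) 1) := by
      intro i
      rw [Measure.map_apply (hadm.meas i) measurableSet_Icc, hμapp]
      refine le_trans (Finset.sum_le_sum fun u _ => ?_) le_self_add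
      by_cases h : (∃ j, 1 ≤ j ∧ j ≤ m ∧ wordIter f (emb i0 u) j x ≤ 1 - ε)
          ∧ 1 - t ≤ f i (wordIter f (emb i0 u) m x)
      · have hmem : wordIter f (emb i0 u) m x ∈ f i ⁻¹' Icc (1 - t) (1:ℝ) :=
          Set.mem_preimage.2 ⟨h.2, (hadm.maps i (hFmem u)).2⟩
        rw [if_pos h, if_pos h.1, Set.indicator_of_mem hmem, Pi.one_apply, mul_one]
      · rw [if_neg h]
        exact zero_le
    calc ∑ i : Fin N, ∑ u : Fin m → Fin N,
          (if (∃ j, 1 ≤ j ∧ j ≤ m + 1 ∧ wordIter f (emb i0 (Fin.snoc u i :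
                Fin (m+1) → Fin N)) j x ≤ 1 - ε)
              ∧ 1 - t ≤ wordIter f (emb i0 (Fin.snoc u i : Fin (m+1) → Fin N)) (m+1) x
            then wt p (Fin.snoc u i : Fin (m+1) → Fin N) else 0)
        ≤ ∑ i : Fin N, ENNReal.ofReal (p i) * (Measure.map (f i) μ) (Icc (1 - t) 1) := by
          refine Finset.sum_le_sum fun i _ => ?_
          refine le_trans (Finset.sum_le_sum fun u _ => hterm i u) ?_
          rw [← Finset.mul_sum]
          exact mul_le_mul_right (hmap i) _
      _ = (∑ i, ENNReal.ofReal (p i) • Measure.map (f i) μ) (Icc (1 - t) 1) := by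
          rw [Measure.finset_sum_apply]
          simp only [Measure.smul_apply, smul_eq_mul]
      _ ≤ ENNReal.ofReal (M * t ^ α) := hkey

end Stmt15Aux

open Stmt15Aux in
/-- (Lemma `return_to_J`.) With `ε_n = (1-δ)^{⌊n^{1/4}⌋/2}` and
`J = [a, 1-a]`, for all sufficiently large `n` the probability that the
`⌊n^{1/4}⌋`-th iterate maps `[ε_n, 1-ε_n]` into `J` is at least `1/5`. -/
theorem stmt15 (N : ℕ) (f : Fin N → ℝ → ℝ) (p d e : Fin N → ℝ)
    (hadm : AdmissibleIFS N f p d e)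
    (ε α δ M a : ℝ)
    (hε : ε ∈ Ioo (0:ℝ) (1/2)) (hα : α ∈ Ioo (0:ℝ) 1) (hδ : δ ∈ Ioo (0:ℝ) 1)
    (hM : M = ε ^ (-α)) (ha : a ∈ Ioo (0:ℝ) (1/2)) (hMa : M < a ^ (-α) / 6)
    -- the Markov operator preserves the class `P⁻_{M,α}` (and symmetrically `P⁺_{M,α}`)
    (hclass : ∀ μ : Measure ℝ, IsProbabilityMeasure μ → μ (Icc (0:ℝ) 1)ᶜ = 0 →
      (∀ x ∈ Icc (0:ℝ) 1, μ (Icc 0 x) ≤ ENNReal.ofReal (M * x ^ α)) →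
      ∀ x ∈ Icc (0:ℝ) 1,
        (∑ i, ENNReal.ofReal (p i) • Measure.map (f i) μ) (Icc 0 x)
          ≤ ENNReal.ofReal (M * x ^ α))
    (hclass' : ∀ μ : Measure ℝ, IsProbabilityMeasure μ → μ (Icc (0:ℝ) 1)ᶜ = 0 →
      (∀ x ∈ Icc (0:ℝ) 1, μ (Icc (1 - x) 1) ≤ ENNReal.ofReal (M * x ^ α)) →
      ∀ x ∈ Icc (0:ℝ) 1,
        (∑ i, ENNReal.ofReal (p i) • Measure.map (f i) μ) (Icc (1 - x) 1)
          ≤ ENNReal.ofReal (M * x ^ α))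
    -- `ℙ` is the product measure on `Σ = {1,…,N}^ℕ` with marginals `p`
    (ℙ : Measure (ℕ → Fin N)) (hPprob : IsProbabilityMeasure ℙ)
    (hcyl : ∀ m : ℕ, ℙ.map (fun ω (k : Fin m) => ω k)
      = Measure.pi (fun _ : Fin m => ∑ j, ENNReal.ofReal (p j) • Measure.dirac j))
    -- the probability bounds on `⋂_{j=1}^{⌊n^{1/4}⌋} A_{x,j}(ε)` and `A^{x,j}(ε)`
    (hA0 : ∀ n : ℕ, ∀ x ∈ Icc ((1 - δ) ^ ((nroot4 n : ℝ) / 2)) ε,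
      ℙ {ω | ∀ j : ℕ, 1 ≤ j → j ≤ nroot4 n → wordIter f ω j x < ε}
        ≤ ENNReal.ofReal ((1 - δ) ^ (α * (nroot4 n : ℝ) / 2)))
    (hA1 : ∀ n : ℕ, ∀ x ∈ Icc (1 - ε) (1 - (1 - δ) ^ ((nroot4 n : ℝ) / 2)),
      ℙ {ω | ∀ j : ℕ, 1 ≤ j → j ≤ nroot4 n → 1 - ε < wordIter f ω j x}
        ≤ ENNReal.ofReal ((1 - δ) ^ (α * (nroot4 n : ℝ) / 2))) :
    ∃ n₀ : ℕ, ∀ n : ℕ, n₀ ≤ n →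
      ENNReal.ofReal (1 / 5)
        ≤ ℙ {ω | wordIter f ω (nroot4 n) ''
              Icc ((1 - δ) ^ ((nroot4 n : ℝ) / 2)) (1 - (1 - δ) ^ ((nroot4 n : ℝ) / 2))
            ⊆ Icc a (1 - a)} := by
  classical
  have hN : N ≠ 0 := by
    intro h
    subst h
    simpa using hadm.psum
  have i0 : Fin N := ⟨0, Nat.pos_of_ne_zero hN⟩
  have hp0 : ∀ i, 0 ≤ p i := fun i => (hadm.ppos i).le
  have hε1 : ε < 1 := lt_trans hε.2 (by norm_num)
  have h1δ0 : 0 < 1 - δ := by linarith [hδ.2]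
  have h1δ1 : 1 - δ < 1 := by linarith [hδ.1]
  -- choose K₀
  have hdecay : ∀ c : ℝ, 0 < c → ∀ b : ℝ, 0 < b →
      ∃ K₀ : ℕ, ∀ K : ℕ, K₀ ≤ K → (1 - δ) ^ (c * (K : ℝ)) ≤ b := by
    intro c hc b hb
    have hbase0 : (0:ℝ) ≤ (1 - δ) ^ c := Real.rpow_nonneg h1δ0.le c
    have hbase1 : (1 - δ) ^ c < 1 := Real.rpow_lt_one h1δ0.le h1δ1 hc
    have htend := tendsto_pow_atTop_nhds_zero_of_lt_one hbase0 hbase1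
    have hev := (tendsto_order.1 htend).2 b hb
    obtain ⟨K₀, hK₀⟩ := (Filter.eventually_atTop).1 hev
    refine ⟨K₀, fun K hK => ?_⟩
    have : (1 - δ) ^ (c * (K:ℝ)) = ((1 - δ) ^ c) ^ K := by
      rw [Real.rpow_mul h1δ0.le, Real.rpow_natCast]
    rw [this]
    exact (hK₀ K hK).le
  obtain ⟨K₁, hK₁⟩ := hdecay (1/2) (by norm_num) (min ε (1/2)) (lt_min hε.1 (by norm_num))
  obtain ⟨K₂, hK₂⟩ := hdecay (α/2) (by have := hα.1; positivity) (1/10) (by norm_num)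
  refine ⟨(K₁ + K₂ + 1) ^ 4, fun n hn => ?_⟩
  set k := nroot4 n with hk
  -- k is large
  have hkK : K₁ + K₂ ≤ k := by
    rw [hk, nroot4]
    refine Nat.le_floor ?_
    have hcast : ((K₁ + K₂ + 1 : ℕ) : ℝ) ^ (4:ℕ) ≤ (n : ℝ) := by
      rw [← Nat.cast_pow]
      exact_mod_cast hn
    have h0 : (0:ℝ) ≤ ((K₁ + K₂ + 1 : ℕ) : ℝ) := Nat.cast_nonneg _
    calc ((K₁ + K₂ : ℕ) : ℝ) ≤ ((K₁ + K₂ + 1 : ℕ) : ℝ) := by exact_mod_cast Nat.le_succ _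
      _ = ((((K₁ + K₂ + 1 : ℕ) : ℝ)) ^ (4:ℕ)) ^ ((1:ℝ)/4) := by
          rw [← Real.rpow_natCast (((K₁ + K₂ + 1 : ℕ) : ℝ)) 4, ← Real.rpow_mul h0]
          norm_num
      _ ≤ (n : ℝ) ^ ((1:ℝ)/4) :=
          Real.rpow_le_rpow (by positivity) hcast (by norm_num)
  set εn : ℝ := (1 - δ) ^ ((k : ℝ) / 2) with hεn
  have hr1 : εn ≤ min ε (1/2) := by
    have := hK₁ k (by omega)
    rw [hεn]
    have hexp : (1/2 : ℝ) * (k:ℝ) = (k:ℝ)/2 := by ring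
    rwa [hexp] at this
  have hr2 : (1 - δ) ^ (α * (k:ℝ) / 2) ≤ 1/10 := by
    have := hK₂ k (by omega)
    have hexp : (α/2 : ℝ) * (k:ℝ) = α * (k:ℝ)/2 := by ring
    rwa [hexp] at this
  have hεn0 : 0 < εn := Real.rpow_pos_of_pos h1δ0 _
  have hεnε : εn ≤ ε := le_trans hr1 (min_le_left _ _)
  have hεnh : εn ≤ 1/2 := le_trans hr1 (min_le_right _ _)
  have hεnIcc : εn ∈ Icc (0:ℝ) 1 := ⟨hεn0.le, by linarith⟩
  have h1εnIcc : (1 - εn) ∈ Icc (0:ℝ) 1 := ⟨by linarith, by linarith⟩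
  -- events
  set Good : Set (ℕ → Fin N) :=
    {ω | wordIter f ω k '' Icc εn (1 - εn) ⊆ Icc a (1 - a)} with hGood
  set Bad0 : Set (ℕ → Fin N) := {ω | wordIter f ω k εn < a} with hBad0def
  set Bad1 : Set (ℕ → Fin N) := {ω | 1 - a < wordIter f ω k (1 - εn)} with hBad1def
  have hcover : ∀ ω, ω ∈ Good ∪ (Bad0 ∪ Bad1) := by
    intro ω
    by_cases hb0 : ω ∈ Bad0
    · exact Or.inr (Or.inl hb0)
    by_cases hb1 : ω ∈ Bad1
    · exact Or.inr (Or.inr hb1)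
    refine Or.inl ?_
    rw [hGood]
    intro y hy
    obtain ⟨z, hz, rfl⟩ := hy
    have hzIcc : z ∈ Icc (0:ℝ) 1 := ⟨le_trans hεn0.le hz.1, le_trans hz.2 (by linarith)⟩
    have hlow : wordIter f ω k εn ≤ wordIter f ω k z :=
      wordIter_mono hadm ω k hεnIcc hzIcc hz.1
    have hhigh : wordIter f ω k z ≤ wordIter f ω k (1 - εn) :=
      wordIter_mono hadm ω k hzIcc h1εnIcc hz.2
    rw [hBad0def] at hb0
    rw [hBad1def] at hb1
    simp only [Set.mem_setOf_eq, not_lt] at hb0 hb1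
    exact ⟨le_trans hb0 hlow, le_trans hhigh hb1⟩
  -- bound on Bad0
  have haIcc : a ∈ Icc (0:ℝ) 1 := ⟨ha.1.le, by linarith [ha.2]⟩
  have hBad0 : ℙ Bad0 ≤ ENNReal.ofReal ((1 - δ) ^ (α * (k:ℝ) / 2))
      + ENNReal.ofReal (M * a ^ α) := by
    have hsub : Bad0 ⊆ {ω | ∀ j : ℕ, 1 ≤ j → j ≤ k → wordIter f ω j εn < ε}
        ∪ {ω | (∃ j, 1 ≤ j ∧ j ≤ k ∧ ε ≤ wordIter f ω j εn)
            ∧ wordIter f ω k εn ≤ a} := by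
      intro ω hω
      by_cases hst : ∀ j : ℕ, 1 ≤ j → j ≤ k → wordIter f ω j εn < ε
      · exact Or.inl hst
      · push_neg at hst
        obtain ⟨j, hj1, hj2, hj3⟩ := hst
        exact Or.inr ⟨⟨j, hj1, hj2, hj3⟩, le_of_lt hω⟩
    have hstay : ℙ {ω | ∀ j : ℕ, 1 ≤ j → j ≤ k → wordIter f ω j εn < ε}
        ≤ ENNReal.ofReal ((1 - δ) ^ (α * (k:ℝ) / 2)) :=
      hA0 n εn ⟨le_rfl, hεnε⟩
    have hesc : ℙ {ω | (∃ j, 1 ≤ j ∧ j ≤ k ∧ ε ≤ wordIter f ω j εn)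
        ∧ wordIter f ω k εn ≤ a} ≤ ENNReal.ofReal (M * a ^ α) := by
      have hpre : {ω : ℕ → Fin N | (∃ j, 1 ≤ j ∧ j ≤ k ∧ ε ≤ wordIter f ω j εn)
          ∧ wordIter f ω k εn ≤ a}
          = (fun ω (j : Fin k) => ω j) ⁻¹'
            {u : Fin k → Fin N | (∃ j, 1 ≤ j ∧ j ≤ k ∧ ε ≤ wordIter f (emb i0 u) j εn)
              ∧ wordIter f (emb i0 u) k εn ≤ a} := by
        ext ω
        simp only [Set.mem_setOf_eq, Set.mem_preimage]
        constructor
        · rintro ⟨⟨j, hj1, hj2, hj3⟩, hfin⟩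
          refine ⟨⟨j, hj1, hj2, ?_⟩, ?_⟩
          · rwa [wordIter_emb_restrict f i0 ω hj2]
          · rwa [wordIter_emb_restrict f i0 ω le_rfl]
        · rintro ⟨⟨j, hj1, hj2, hj3⟩, hfin⟩
          rw [wordIter_emb_restrict f i0 ω hj2] at hj3
          rw [wordIter_emb_restrict f i0 ω le_rfl] at hfin
          exact ⟨⟨j, hj1, hj2, hj3⟩, hfin⟩
      rw [hpre, prob_cylinder hp0 hadm.psum ℙ hcyl k _]
      refine le_trans (Finset.sum_le_sum fun u _ => ?_)
        (escape_bound hadm i0 hε.1 hε1 hα.1 hM hclass k hεnIcc a haIcc)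
      split_ifs with h1 h2 h3
      · exact le_rfl
      · exact absurd h1 h2
      · exact zero_le
      · exact le_rfl
    calc ℙ Bad0 ≤ ℙ ({ω | ∀ j : ℕ, 1 ≤ j → j ≤ k → wordIter f ω j εn < ε}
          ∪ {ω | (∃ j, 1 ≤ j ∧ j ≤ k ∧ ε ≤ wordIter f ω j εn)
              ∧ wordIter f ω k εn ≤ a}) := measure_mono hsub
      _ ≤ _ := le_trans (measure_union_le _ _) (add_le_add hstay hesc)
  -- bound on Bad1
  have hBad1 : ℙ Bad1 ≤ ENNReal.ofReal ((1 - δ) ^ (α * (k:ℝ) / 2))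
      + ENNReal.ofReal (M * a ^ α) := by
    have hsub : Bad1 ⊆ {ω | ∀ j : ℕ, 1 ≤ j → j ≤ k → 1 - ε < wordIter f ω j (1 - εn)}
        ∪ {ω | (∃ j, 1 ≤ j ∧ j ≤ k ∧ wordIter f ω j (1 - εn) ≤ 1 - ε)
            ∧ 1 - a ≤ wordIter f ω k (1 - εn)} := by
      intro ω hω
      by_cases hst : ∀ j : ℕ, 1 ≤ j → j ≤ k → 1 - ε < wordIter f ω j (1 - εn)
      · exact Or.inl hst
      · push_neg at hst
        obtain ⟨j, hj1, hj2, hj3⟩ := hst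
        exact Or.inr ⟨⟨j, hj1, hj2, hj3⟩, le_of_lt hω⟩
    have hstay : ℙ {ω | ∀ j : ℕ, 1 ≤ j → j ≤ k → 1 - ε < wordIter f ω j (1 - εn)}
        ≤ ENNReal.ofReal ((1 - δ) ^ (α * (k:ℝ) / 2)) :=
      hA1 n (1 - εn) ⟨by linarith, le_rfl⟩
    have hesc : ℙ {ω | (∃ j, 1 ≤ j ∧ j ≤ k ∧ wordIter f ω j (1 - εn) ≤ 1 - ε)
        ∧ 1 - a ≤ wordIter f ω k (1 - εn)} ≤ ENNReal.ofReal (M * a ^ α) := by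
      have hpre : {ω : ℕ → Fin N | (∃ j, 1 ≤ j ∧ j ≤ k ∧ wordIter f ω j (1 - εn) ≤ 1 - ε)
          ∧ 1 - a ≤ wordIter f ω k (1 - εn)}
          = (fun ω (j : Fin k) => ω j) ⁻¹'
            {u : Fin k → Fin N |
              (∃ j, 1 ≤ j ∧ j ≤ k ∧ wordIter f (emb i0 u) j (1 - εn) ≤ 1 - ε)
              ∧ 1 - a ≤ wordIter f (emb i0 u) k (1 - εn)} := by
        ext ω
        simp only [Set.mem_setOf_eq, Set.mem_preimage]
        constructor
        · rintro ⟨⟨j, hj1, hj2, hj3⟩, hfin⟩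
          refine ⟨⟨j, hj1, hj2, ?_⟩, ?_⟩
          · rwa [wordIter_emb_restrict f i0 ω hj2]
          · rwa [wordIter_emb_restrict f i0 ω le_rfl]
        · rintro ⟨⟨j, hj1, hj2, hj3⟩, hfin⟩
          rw [wordIter_emb_restrict f i0 ω hj2] at hj3
          rw [wordIter_emb_restrict f i0 ω le_rfl] at hfin
          exact ⟨⟨j, hj1, hj2, hj3⟩, hfin⟩
      rw [hpre, prob_cylinder hp0 hadm.psum ℙ hcyl k _]
      refine le_trans (Finset.sum_le_sum fun u _ => ?_)
        (escape_bound' hadm i0 hε.1 hε1 hα.1 hM hclass' k h1εnIcc a haIcc)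
      split_ifs with h1 h2 h3
      · exact le_rfl
      · exact absurd h1 h2
      · exact zero_le
      · exact le_rfl
    calc ℙ Bad1 ≤ ℙ ({ω | ∀ j : ℕ, 1 ≤ j → j ≤ k → 1 - ε < wordIter f ω j (1 - εn)}
          ∪ {ω | (∃ j, 1 ≤ j ∧ j ≤ k ∧ wordIter f ω j (1 - εn) ≤ 1 - ε)
              ∧ 1 - a ≤ wordIter f ω k (1 - εn)}) := measure_mono hsub
      _ ≤ _ := le_trans (measure_union_le _ _) (add_le_add hstay hesc)
  -- combine
  set r : ℝ := (1 - δ) ^ (α * (k:ℝ) / 2) with hr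
  set q : ℝ := M * a ^ α with hq
  have hr0 : 0 ≤ r := Real.rpow_nonneg h1δ0.le _
  have hq0 : 0 ≤ q := by
    have hε0 := hε.1
    have ha0 := ha.1
    rw [hq, hM]
    positivity
  have hq6 : q < 1/6 := by
    rw [hq]
    have haα : (0:ℝ) < a ^ α := Real.rpow_pos_of_pos ha.1 _
    have := mul_lt_mul_of_pos_right hMa haα
    have hinv : a ^ (-α) * a ^ α = 1 := by
      rw [← Real.rpow_add ha.1]
      simp
    calc M * a ^ α < a ^ (-α) / 6 * a ^ α := this
      _ = (a ^ (-α) * a ^ α) / 6 := by ring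
      _ = 1/6 := by rw [hinv]
  have hB : ℙ Bad0 + ℙ Bad1 ≤ ENNReal.ofReal ((r + q) + (r + q)) := by
    rw [ENNReal.ofReal_add (by linarith) (by linarith),
      ENNReal.ofReal_add hr0 hq0]
    exact add_le_add hBad0 hBad1
  have hBne : ℙ Bad0 + ℙ Bad1 ≠ ⊤ :=
    ne_of_lt (lt_of_le_of_lt hB ENNReal.ofReal_lt_top)
  have hunion : (1:ENNReal) ≤ ℙ Good + (ℙ Bad0 + ℙ Bad1) := by
    have h1 : ℙ Set.univ ≤ ℙ (Good ∪ (Bad0 ∪ Bad1)) :=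
      measure_mono fun ω _ => hcover ω
    rw [measure_univ] at h1
    exact le_trans h1 (le_trans (measure_union_le _ _)
      (add_le_add_right (measure_union_le _ _) _))
  have hnum : ENNReal.ofReal (1/5) + (ℙ Bad0 + ℙ Bad1)
      ≤ ℙ Good + (ℙ Bad0 + ℙ Bad1) := by
    refine le_trans ?_ hunion
    calc ENNReal.ofReal (1/5) + (ℙ Bad0 + ℙ Bad1)
        ≤ ENNReal.ofReal (1/5) + ENNReal.ofReal ((r + q) + (r + q)) :=
          add_le_add_right hB _
      _ = ENNReal.ofReal (1/5 + ((r + q) + (r + q))) :=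
          (ENNReal.ofReal_add (by norm_num) (by linarith)).symm
      _ ≤ ENNReal.ofReal 1 := ENNReal.ofReal_le_ofReal (by
          have : r ≤ 1/10 := hr2
          linarith)
      _ = 1 := ENNReal.ofReal_one
  exact (ENNReal.add_le_add_iff_right hBne).1 hnum
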